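/- Let G be a graph on [n], z ∈ ℕ, and π = π_z(G) the encoding permutation. For any vertices u, v ∈ [n], there is at most one index i ∈ [p_M(u), p_R(u)−1] with π(i) ∈ [q_M(v), q_M(v)+deg⁻(v)−1]; moreover such an index exists if and only if u < v and {u,v} ∈ E(G). -/

import Mathlib

open scoped Classical

noncomputable section

/-- Number of right-neighbours of `v` (neighbours `u` with `v < u ≤ n`). -/
def degPlus (n : ℕ) (E : ℕ → ℕ → Prop) (v : ℕ) : ℕ :=
  ((Finset.Icc (v + 1) n).filter (fun u => E v u)).card

/-- Number of left-neighbours of `v` (neighbours `u` with `1 ≤ u < v`). -/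
def degMinus (n : ℕ) (E : ℕ → ℕ → Prop) (v : ℕ) : ℕ :=
  ((Finset.Icc 1 (v - 1)).filter (fun u => E v u)).card

/-- The number of edges of the graph with vertex set `[1, n]` and adjacency `E`. -/
def edgeCount (n : ℕ) (E : ℕ → ℕ → Prop) : ℕ :=
  (((Finset.Icc 1 n) ×ˢ (Finset.Icc 1 n)).filter (fun p => p.1 < p.2 ∧ E p.1 p.2)).card

/-- Starting position of the left separating run of `v`. -/
def pL (n z : ℕ) (E : ℕ → ℕ → Prop) (v : ℕ) : ℕ :=
  1 + ∑ w ∈ Finset.Ico 1 v, (2 * z + degPlus n E w)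

/-- Starting position of the encoding entries of `v`. -/
def pM (n z : ℕ) (E : ℕ → ℕ → Prop) (v : ℕ) : ℕ := pL n z E v + z

/-- Starting position of the right separating run of `v`. -/
def pR (n z : ℕ) (E : ℕ → ℕ → Prop) (v : ℕ) : ℕ := pM n z E v + degPlus n E v

/-- Starting (largest) value of the right separating run of `v`. -/
def qR (n z : ℕ) (E : ℕ → ℕ → Prop) (v : ℕ) : ℕ :=
  z + ∑ w ∈ Finset.Ico 1 v, (2 * z + degMinus n E w)

/-- Least value reserved for the encoding entries pointing to `v`. -/
def qM (n z : ℕ) (E : ℕ → ℕ → Prop) (v : ℕ) : ℕ := qR n z E v + 1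

/-- Starting (largest) value of the left separating run of `v`. -/
def qL (n z : ℕ) (E : ℕ → ℕ → Prop) (v : ℕ) : ℕ := qR n z E v + z + degMinus n E v

/-- `ℓ(v, u) = |{w < v : {w, u} ∈ E}|`. -/
def ellE (E : ℕ → ℕ → Prop) (v u : ℕ) : ℕ :=
  ((Finset.Ico 1 v).filter (fun w => E w u)).card

/-- The sorted list of right-neighbours of `v`. -/
def nbrList (n : ℕ) (E : ℕ → ℕ → Prop) (v : ℕ) : List ℕ :=
  Finset.sort ((Finset.Icc (v + 1) n).filter (fun u => E v u)) (· ≤ ·)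

/-- The encoding permutation `π_z(G)` of the paper, as a function on positions
(acting on `[1, 2zn + |E(G)|]`): for each vertex `v` (in order) it consists of a
decreasing run of length `z` starting with value `qL v`, then one encoding entry
`qM u + ℓ(v, u)` for each right-neighbour `u` of `v` in increasing order, then a
decreasing run of length `z` starting with value `qR v`. -/
def enc (n z : ℕ) (E : ℕ → ℕ → Prop) (i : ℕ) : ℕ :=
  if h1 : ∃ v, v ∈ Finset.Icc 1 n ∧ pL n z E v ≤ i ∧ i < pM n z E v then
    qL n z E h1.choose - (i - pL n z E h1.choose)
  else if h2 : ∃ v, v ∈ Finset.Icc 1 n ∧ pR n z E v ≤ i ∧ i < pR n z E v + z then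
    qR n z E h2.choose - (i - pR n z E h2.choose)
  else if h3 : ∃ v, v ∈ Finset.Icc 1 n ∧ pM n z E v ≤ i ∧ i < pR n z E v then
    (fun v => (fun u => qM n z E u + ellE E v u)
      ((nbrList n E v).getD (i - pM n z E v) 0)) h3.choose
  else 0

/-- `i` lies in the left or right separating run of the vertex `v`. -/
def inRunOf (n z : ℕ) (E : ℕ → ℕ → Prop) (v i : ℕ) : Prop :=
  (pL n z E v ≤ i ∧ i < pL n z E v + z) ∨ (pR n z E v ≤ i ∧ i < pR n z E v + z)

/-- `i` lies in some separating run. -/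
def inSepRun (n z : ℕ) (E : ℕ → ℕ → Prop) (i : ℕ) : Prop :=
  ∃ v, v ∈ Finset.Icc 1 n ∧ inRunOf n z E v i

/-- `σ`, a bijection of `[1, l]`, is a pattern of `π`, a bijection of `[1, m]`:
there is a strictly increasing `φ : [1, l] → [1, m]` with
`σ x < σ y ↔ π (φ x) < π (φ y)`. -/
def IsPatternOn (σ : ℕ → ℕ) (l : ℕ) (π : ℕ → ℕ) (m : ℕ) : Prop :=
  ∃ φ : ℕ → ℕ, Set.MapsTo φ (Set.Icc 1 l) (Set.Icc 1 m) ∧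
    StrictMonoOn φ (Set.Icc 1 l) ∧
    ∀ x ∈ Set.Icc 1 l, ∀ y ∈ Set.Icc 1 l, (σ x < σ y ↔ π (φ x) < π (φ y))

end

section AuxEnc

variable (n z : ℕ) (E : ℕ → ℕ → Prop)

lemma pL_one_le (v : ℕ) : 1 ≤ pL n z E v := Nat.le_add_right 1 _

lemma pL_mono {a b : ℕ} (h : a ≤ b) : pL n z E a ≤ pL n z E b := by
  unfold pL
  exact Nat.add_le_add_left (Finset.sum_le_sum_of_subset
    (Finset.Ico_subset_Ico_right h)) 1

lemma pL_succ {v : ℕ} (hv : 1 ≤ v) : pL n z E (v + 1) = pR n z E v + z := by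
  simp only [pR, pM, pL]
  rw [Finset.sum_Ico_succ_top hv]
  ring

lemma pL_succ_le {a b : ℕ} (ha : 1 ≤ a) (h : a < b) : pR n z E a + z ≤ pL n z E b := by
  rw [← pL_succ n z E ha]; exact pL_mono n z E h

lemma qR_mono {a b : ℕ} (h : a ≤ b) : qR n z E a ≤ qR n z E b := by
  unfold qR
  exact Nat.add_le_add_left (Finset.sum_le_sum_of_subset
    (Finset.Ico_subset_Ico_right h)) z

lemma qR_succ {v : ℕ} (hv : 1 ≤ v) : qR n z E (v + 1) = qR n z E v + 2 * z + degMinus n E v := by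
  simp only [qR]
  rw [Finset.sum_Ico_succ_top hv]
  ring

lemma qM_gap {a b : ℕ} (ha : 1 ≤ a) (h : a < b) :
    qM n z E a + 2 * z + degMinus n E a ≤ qM n z E b := by
  have h1 : qR n z E (a + 1) ≤ qR n z E b := qR_mono n z E h
  rw [qR_succ n z E ha] at h1
  simp only [qM]; omega

lemma vertex_unique {u w i : ℕ} (hu1 : 1 ≤ u) (hw1 : 1 ≤ w)
    (hpm : pM n z E u ≤ i) (hpr : i < pR n z E u)
    (hl : pL n z E w ≤ i) (hr : i < pR n z E w + z) : w = u := by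
  rcases lt_trichotomy w u with h | h | h
  · exfalso
    have h1 : pR n z E w + z ≤ pL n z E u := pL_succ_le n z E hw1 h
    have h2 : pL n z E u ≤ pM n z E u := Nat.le_add_right _ _
    omega
  · exact h
  · exfalso
    have h1 : pR n z E u + z ≤ pL n z E w := pL_succ_le n z E hu1 h
    omega

lemma nbrList_length (v : ℕ) : (nbrList n E v).length = degPlus n E v :=
  Finset.length_sort _

lemma nbrList_nodup (v : ℕ) : (nbrList n E v).Nodup :=
  Finset.sort_nodup _ _

lemma nbrList_mem {v w : ℕ} : w ∈ nbrList n E v ↔ (v + 1 ≤ w ∧ w ≤ n) ∧ E v w := by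
  rw [nbrList, Finset.mem_sort, Finset.mem_filter, Finset.mem_Icc]

lemma enc_eval {u i : ℕ} (hu : u ∈ Finset.Icc 1 n)
    (h1 : pM n z E u ≤ i) (h2 : i < pR n z E u) :
    enc n z E i = qM n z E ((nbrList n E u).getD (i - pM n z E u) 0)
      + ellE E u ((nbrList n E u).getD (i - pM n z E u) 0) := by
  have hex : ∃ w, w ∈ Finset.Icc 1 n ∧ pM n z E w ≤ i ∧ i < pR n z E w := ⟨u, hu, h1, h2⟩
  have hu1 : 1 ≤ u := (Finset.mem_Icc.1 hu).1
  have hn1 : ¬ ∃ w, w ∈ Finset.Icc 1 n ∧ pL n z E w ≤ i ∧ i < pM n z E w := by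
    rintro ⟨w, hwm, hle, hlt⟩
    have hw : w = u := by
      refine vertex_unique n z E hu1 (Finset.mem_Icc.1 hwm).1 h1 h2 hle ?_
      have : pM n z E w ≤ pR n z E w + z := by
        simp only [pR]; omega
      omega
    subst hw; omega
  have hn2 : ¬ ∃ w, w ∈ Finset.Icc 1 n ∧ pR n z E w ≤ i ∧ i < pR n z E w + z := by
    rintro ⟨w, hwm, hle, hlt⟩
    have hw : w = u := by
      refine vertex_unique n z E hu1 (Finset.mem_Icc.1 hwm).1 h1 h2 ?_ hlt
      have : pL n z E w ≤ pR n z E w := by simp only [pR, pM]; omega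
      omega
    subst hw; omega
  rw [enc, dif_neg hn1, dif_neg hn2, dif_pos hex]
  have hc := hex.choose_spec
  have hcu : hex.choose = u := vertex_unique n z E hu1 (Finset.mem_Icc.1 hc.1).1 h1 h2
    (by have : pL n z E hex.choose ≤ pM n z E hex.choose := Nat.le_add_right _ _; omega)
    (by omega)
  rw [hcu]

lemma ell_bound (hsym : ∀ a b, E a b → E b a) {u w : ℕ} (hu : 1 ≤ u) (huw : u < w)
    (he : E u w) :
    1 ≤ degMinus n E w ∧ ellE E u w + 1 ≤ degMinus n E w := by
  classical
  have hwu : E w u := hsym u w he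
  have humem : u ∈ (Finset.Icc 1 (w - 1)).filter (fun x => E w x) := by
    simp only [Finset.mem_filter, Finset.mem_Icc]
    exact ⟨⟨hu, by omega⟩, hwu⟩
  have hpos : 1 ≤ degMinus n E w := by
    rw [degMinus]
    exact Finset.card_pos.2 ⟨u, humem⟩
  refine ⟨hpos, ?_⟩
  have hsub : (Finset.Ico 1 u).filter (fun x => E x w) ⊆
      ((Finset.Icc 1 (w - 1)).filter (fun x => E w x)).erase u := by
    intro x hx
    simp only [Finset.mem_filter, Finset.mem_Ico] at hx
    simp only [Finset.mem_erase, Finset.mem_filter, Finset.mem_Icc]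
    exact ⟨by omega, ⟨hx.1.1, by omega⟩, hsym x w hx.2⟩
  have hcard := Finset.card_le_card hsub
  rw [Finset.card_erase_of_mem humem] at hcard
  rw [ellE, degMinus] at *
  omega

lemma qM_force {v w e : ℕ} (hv : 1 ≤ v) (hw : 1 ≤ w) (he : e + 1 ≤ degMinus n E w)
    (h1 : qM n z E v ≤ qM n z E w + e)
    (h2 : qM n z E w + e ≤ qM n z E v + degMinus n E v - 1) : w = v := by
  rcases lt_trichotomy w v with h | h | h
  · have := qM_gap n z E hw h
    omega
  · exact h
  · have := qM_gap n z E hv h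
    have hqv1 : 1 ≤ qM n z E v := by simp only [qM]; omega
    omega

lemma key_lemma (hsym : ∀ a b, E a b → E b a) {u v i : ℕ}
    (hu : u ∈ Finset.Icc 1 n) (hv1 : 1 ≤ v)
    (hi : i ∈ Finset.Icc (pM n z E u) (pR n z E u - 1))
    (henc : enc n z E i ∈ Finset.Icc (qM n z E v) (qM n z E v + degMinus n E v - 1)) :
    i - pM n z E u < (nbrList n E u).length ∧
      (nbrList n E u).getD (i - pM n z E u) 0 = v ∧ u < v ∧ E u v := by
  have hu1 : 1 ≤ u := (Finset.mem_Icc.1 hu).1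
  rw [Finset.mem_Icc] at hi
  have hp1 : 1 ≤ pL n z E u := pL_one_le n z E u
  have hpRpos : 1 ≤ pR n z E u := by simp only [pR, pM]; omega
  have hilt : i < pR n z E u := by omega
  have hklt : i - pM n z E u < (nbrList n E u).length := by
    rw [nbrList_length]
    simp only [pR] at hilt
    omega
  set w := (nbrList n E u).getD (i - pM n z E u) 0 with hw
  have hwmem : w ∈ nbrList n E u := by
    rw [hw, List.getD_eq_getElem _ _ hklt]
    exact List.getElem_mem _
  rw [nbrList_mem] at hwmem
  obtain ⟨⟨hw1, hw2⟩, hEuw⟩ := hwmem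
  have heval := enc_eval n z E hu hi.1 hilt
  rw [← hw] at heval
  rw [heval, Finset.mem_Icc] at henc
  have hb := ell_bound n E hsym hu1 (by omega) hEuw
  have hwv : w = v := qM_force n z E hv1 (by omega) hb.2 henc.1 henc.2
  exact ⟨hklt, hwv, by omega, hwv ▸ hEuw⟩

end AuxEnc

/-- Observation 2 of the paper: for vertices `u, v`, there is at most one index in
`[pM u, pR u − 1]` whose `enc`-value lies in `[qM v, qM v + deg⁻ v − 1]`, and such an
index exists iff `u < v` and `{u, v}` is an edge. -/
theorem enc_unique_encoding_entry (n z : ℕ) (E : ℕ → ℕ → Prop)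
    (hsym : ∀ u v, E u v → E v u)
    (hrange : ∀ u v, E u v → u ∈ Finset.Icc 1 n ∧ v ∈ Finset.Icc 1 n)
    (hirr : ∀ v, ¬ E v v)
    (u v : ℕ) (hu : u ∈ Finset.Icc 1 n) (hv : v ∈ Finset.Icc 1 n) :
    (∀ i ∈ Finset.Icc (pM n z E u) (pR n z E u - 1),
      ∀ j ∈ Finset.Icc (pM n z E u) (pR n z E u - 1),
        enc n z E i ∈ Finset.Icc (qM n z E v) (qM n z E v + degMinus n E v - 1) →
        enc n z E j ∈ Finset.Icc (qM n z E v) (qM n z E v + degMinus n E v - 1) →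
        i = j) ∧
    ((∃ i ∈ Finset.Icc (pM n z E u) (pR n z E u - 1),
        enc n z E i ∈ Finset.Icc (qM n z E v) (qM n z E v + degMinus n E v - 1)) ↔
      (u < v ∧ E u v)) := by
  classical
  have hu1 : 1 ≤ u := (Finset.mem_Icc.1 hu).1
  have hv1 : 1 ≤ v := (Finset.mem_Icc.1 hv).1
  constructor
  · intro i hi j hj henci hencj
    obtain ⟨hki, hgi, _, _⟩ := key_lemma n z E hsym hu hv1 hi henci
    obtain ⟨hkj, hgj, _, _⟩ := key_lemma n z E hsym hu hv1 hj hencj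
    rw [Finset.mem_Icc] at hi hj
    have hnd := nbrList_nodup n E u
    rw [List.getD_eq_getElem _ _ hki] at hgi
    rw [List.getD_eq_getElem _ _ hkj] at hgj
    have heq : i - pM n z E u = j - pM n z E u :=
      hnd.getElem_inj_iff.1 (hgi.trans hgj.symm)
    omega
  · constructor
    · rintro ⟨i, hi, henc⟩
      obtain ⟨_, _, h1, h2⟩ := key_lemma n z E hsym hu hv1 hi henc
      exact ⟨h1, h2⟩
    · rintro ⟨huv, hE⟩
      have hvmem : v ∈ nbrList n E u := by
        rw [nbrList_mem]
        exact ⟨⟨by omega, (Finset.mem_Icc.1 hv).2⟩, hE⟩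
      obtain ⟨k, hk, hget⟩ := List.mem_iff_getElem.1 hvmem
      refine ⟨pM n z E u + k, ?_, ?_⟩
      · rw [Finset.mem_Icc]
        rw [nbrList_length] at hk
        have h1 : 1 ≤ pL n z E u := pL_one_le n z E u
        simp only [pR, pM] at *
        omega
      · have hlt : pM n z E u + k < pR n z E u := by
          rw [nbrList_length] at hk; simp only [pR]; omega
        rw [enc_eval n z E hu (Nat.le_add_right _ _) hlt]
        have hk2 : pM n z E u + k - pM n z E u = k := by omega
        rw [hk2, List.getD_eq_getElem _ _ hk, hget]
        have hb := ell_bound n E hsym hu1 huv hE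
        rw [Finset.mem_Icc]
        omega
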